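/- Let N ∈ ℕ and let W : ℝ^N → [0,∞) be continuous with zero set {u : W(u) = 0} equal to a nonempty finite set {α_1, …, α_P}. Then the geodesic distance d_W is a metric on ℝ^N: for all u, v, w ∈ ℝ^N one has d_W(u,v) < ∞, d_W(u,v) = d_W(v,u), d_W(u,w) ≤ d_W(u,v) + d_W(v,w), and d_W(u,v) = 0 if and only if u = v. -/

import Mathlib

open MeasureTheory
open scoped ENNReal

/-- The geodesic distance induced by a potential `W`:
`d_W(u,v) = inf { ∫₀¹ √(2 W(γ(t))) |γ'(t)| dt : γ ∈ C¹([0,1];ℝ^N), γ(0)=u, γ(1)=v }`,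
with values in `ℝ≥0∞` so that finiteness is a meaningful assertion. -/
noncomputable def geodDist {N : ℕ} (W : EuclideanSpace ℝ (Fin N) → ℝ)
    (u v : EuclideanSpace ℝ (Fin N)) : ℝ≥0∞ :=
  sInf {r : ℝ≥0∞ | ∃ γ γ' : ℝ → EuclideanSpace ℝ (Fin N),
    (∀ t ∈ Set.Icc (0 : ℝ) 1, HasDerivAt γ (γ' t) t) ∧
    ContinuousOn γ' (Set.Icc (0 : ℝ) 1) ∧ γ 0 = u ∧ γ 1 = v ∧
    r = ENNReal.ofReal (∫ t in (0 : ℝ)..1, Real.sqrt (2 * W (γ t)) * ‖γ' t‖)}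

/-! ### Auxiliary facts about `Real.smoothTransition` -/

section SmoothTransitionAux

open Set Real

lemma GeodAux.expNegInvGlue_mono : Monotone expNegInvGlue := by
  intro x y hxy
  rcases le_or_gt y 0 with hy | hy
  · rw [expNegInvGlue.zero_of_nonpos (hxy.trans hy), expNegInvGlue.zero_of_nonpos hy]
  rcases le_or_gt x 0 with hx | hx
  · rw [expNegInvGlue.zero_of_nonpos hx]; exact (expNegInvGlue.pos_of_pos hy).le
  · have h1 : expNegInvGlue x = Real.exp (-x⁻¹) := by simp [expNegInvGlue, hx.not_ge]
    rw [h1]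
    have h2 : expNegInvGlue y = Real.exp (-y⁻¹) := by simp [expNegInvGlue, hy.not_ge]
    rw [h2]
    exact Real.exp_le_exp.2 (by simpa using inv_anti₀ hx hxy)

lemma GeodAux.smoothTransition_mono : Monotone Real.smoothTransition := by
  intro x y hxy
  unfold Real.smoothTransition
  have hdx := Real.smoothTransition.pos_denom x
  have hdy := Real.smoothTransition.pos_denom y
  rw [div_le_div_iff₀ hdx hdy]
  have h1 : expNegInvGlue x ≤ expNegInvGlue y := GeodAux.expNegInvGlue_mono hxy
  have h2 : expNegInvGlue (1 - y) ≤ expNegInvGlue (1 - x) :=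
    GeodAux.expNegInvGlue_mono (by linarith)
  nlinarith [expNegInvGlue.nonneg x, expNegInvGlue.nonneg (1-y), expNegInvGlue.nonneg y]

/-- The derivative of the smooth transition function. -/
noncomputable def GeodAux.ψ' : ℝ → ℝ := deriv Real.smoothTransition

lemma GeodAux.ψ_hasDerivAt (t : ℝ) : HasDerivAt Real.smoothTransition (GeodAux.ψ' t) t :=
  ((Real.smoothTransition.contDiff (n := 1)).differentiable (by norm_num) t).hasDerivAt

lemma GeodAux.ψ'_cont : Continuous GeodAux.ψ' :=
  (Real.smoothTransition.contDiff (n := 1)).continuous_deriv le_rfl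

lemma GeodAux.ψ'_nonneg (t : ℝ) : 0 ≤ GeodAux.ψ' t := by
  have h := hasDerivAt_iff_tendsto_slope.1 (GeodAux.ψ_hasDerivAt t)
  refine ge_of_tendsto h ?_
  filter_upwards [self_mem_nhdsWithin] with y hy
  rcases lt_or_gt_of_ne (Ne.symm hy) with h1 | h1
  · rw [slope_def_field]
    exact div_nonneg (by linarith [GeodAux.smoothTransition_mono h1.le]) (by linarith)
  · rw [slope_def_field]
    exact div_nonneg_of_nonpos (by linarith [GeodAux.smoothTransition_mono h1.le]) (by linarith)

lemma GeodAux.ψ'_of_nonpos {t : ℝ} (ht : t ≤ 0) : GeodAux.ψ' t = 0 := by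
  have h1 : HasDerivWithinAt Real.smoothTransition (GeodAux.ψ' t) (Iic 0) t :=
    (GeodAux.ψ_hasDerivAt t).hasDerivWithinAt
  have h2 : HasDerivWithinAt Real.smoothTransition 0 (Iic 0) t := by
    refine (hasDerivWithinAt_const t _ (0:ℝ)).congr (fun s hs => ?_) ?_
    · exact Real.smoothTransition.zero_of_nonpos hs
    · exact Real.smoothTransition.zero_of_nonpos ht
  exact (uniqueDiffOn_Iic 0 t ht).eq_deriv _ h1 h2

lemma GeodAux.ψ'_of_one_le {t : ℝ} (ht : 1 ≤ t) : GeodAux.ψ' t = 0 := by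
  have h1 : HasDerivWithinAt Real.smoothTransition (GeodAux.ψ' t) (Ici 1) t :=
    (GeodAux.ψ_hasDerivAt t).hasDerivWithinAt
  have h2 : HasDerivWithinAt Real.smoothTransition 0 (Ici 1) t := by
    refine (hasDerivWithinAt_const t _ (1:ℝ)).congr (fun s hs => ?_) ?_
    · exact Real.smoothTransition.one_of_one_le hs
    · exact Real.smoothTransition.one_of_one_le ht
  exact (uniqueDiffOn_Ici 1 t ht).eq_deriv _ h1 h2

lemma GeodAux.ψ'_zero : GeodAux.ψ' 0 = 0 := GeodAux.ψ'_of_nonpos le_rfl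

lemma GeodAux.ψ'_one : GeodAux.ψ' 1 = 0 := GeodAux.ψ'_of_one_le le_rfl

lemma GeodAux.ψ_mem (t : ℝ) : Real.smoothTransition t ∈ Set.Icc (0:ℝ) 1 :=
  ⟨Real.smoothTransition.nonneg t, Real.smoothTransition.le_one t⟩

lemma GeodAux.ψ2_hasDerivAt (t : ℝ) :
    HasDerivAt (fun t : ℝ => Real.smoothTransition (2*t)) (2 * GeodAux.ψ' (2*t)) t := by
  have h2 : HasDerivAt (fun t : ℝ => 2*t) 2 t := by simpa using (hasDerivAt_id t).const_mul 2
  have h := (GeodAux.ψ_hasDerivAt (2*t)).comp t h2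
  rw [mul_comm] at h
  exact h

lemma GeodAux.ψ21_hasDerivAt (t : ℝ) :
    HasDerivAt (fun t : ℝ => Real.smoothTransition (2*t - 1)) (2 * GeodAux.ψ' (2*t - 1)) t := by
  have h2 : HasDerivAt (fun t : ℝ => 2*t - 1) 2 t := by
    simpa using ((hasDerivAt_id t).const_mul 2).sub_const 1
  have h := (GeodAux.ψ_hasDerivAt (2*t - 1)).comp t h2
  rw [mul_comm] at h
  exact h

end SmoothTransitionAux

/-! ### Basic lemmas about `geodDist` -/

section GeodBasic

variable {N : ℕ} {W : EuclideanSpace ℝ (Fin N) → ℝ} {u v : EuclideanSpace ℝ (Fin N)}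

lemma geodDist_le (γ γ' : ℝ → EuclideanSpace ℝ (Fin N))
    (hd : ∀ t ∈ Set.Icc (0 : ℝ) 1, HasDerivAt γ (γ' t) t)
    (hc : ContinuousOn γ' (Set.Icc (0 : ℝ) 1)) (h0 : γ 0 = u) (h1 : γ 1 = v) :
    geodDist W u v ≤ ENNReal.ofReal (∫ t in (0 : ℝ)..1, Real.sqrt (2 * W (γ t)) * ‖γ' t‖) :=
  sInf_le ⟨γ, γ', hd, hc, h0, h1, rfl⟩

lemma geodDist_lt_top : geodDist W u v < ⊤ := by
  have h := geodDist_le (W := W) (u := u) (v := v) (fun t => u + t • (v - u)) (fun _ => v - u)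
    (fun t _ => by
      simpa using ((hasDerivAt_id t).smul_const (v - u)).const_add u)
    continuousOn_const (by simp) (by simp)
  exact lt_of_le_of_lt h ENNReal.ofReal_lt_top

lemma geodDist_symm_le : geodDist W u v ≤ geodDist W v u := by
  refine sInf_le_sInf ?_
  rintro r ⟨γ, γ', hd, hc, h0, h1, rfl⟩
  refine ⟨fun t => γ (1 - t), fun t => -γ' (1 - t), fun t ht => ?_, ?_,
    by simp [h1], by simp [h0], ?_⟩
  · have hin : (1 : ℝ) - t ∈ Set.Icc (0:ℝ) 1 := ⟨by linarith [ht.2], by linarith [ht.1]⟩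
    have hinner : HasDerivAt (fun s : ℝ => 1 - s) (-1) t := by
      simpa using (hasDerivAt_id t).const_sub 1
    have h := (hd _ hin).scomp t hinner
    rw [neg_one_smul] at h
    exact h
  · have h : ContinuousOn (fun t : ℝ => γ' (1 - t)) (Set.Icc 0 1) := by
      refine hc.comp (by fun_prop) ?_
      intro t ht
      exact ⟨by linarith [ht.2], by linarith [ht.1]⟩
    exact h.neg
  · congr 1
    have h : (∫ t in (0:ℝ)..1, Real.sqrt (2 * W (γ (1 - t))) * ‖-γ' (1 - t)‖)
        = ∫ t in (0:ℝ)..1, Real.sqrt (2 * W (γ (1 - t))) * ‖γ' (1 - t)‖ := by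
      simp
    rw [h, intervalIntegral.integral_comp_sub_left
      (fun s => Real.sqrt (2 * W (γ s)) * ‖γ' s‖) 1]
    norm_num

lemma geodDist_self : geodDist W u u = 0 := by
  have h := geodDist_le (W := W) (u := u) (v := u) (fun _ => u) (fun _ => 0)
    (fun t _ => hasDerivAt_const t u) continuousOn_const rfl rfl
  simpa using h

lemma path_contOn {γ γ' : ℝ → EuclideanSpace ℝ (Fin N)}
    (hd : ∀ t ∈ Set.Icc (0 : ℝ) 1, HasDerivAt γ (γ' t) t) :
    ContinuousOn γ (Set.Icc (0:ℝ) 1) :=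
  fun t ht => ((hd t ht).continuousAt).continuousWithinAt

lemma integrand_contOn (hWc : Continuous W)
    {γ γ' : ℝ → EuclideanSpace ℝ (Fin N)}
    (hd : ∀ t ∈ Set.Icc (0 : ℝ) 1, HasDerivAt γ (γ' t) t)
    (hc : ContinuousOn γ' (Set.Icc (0 : ℝ) 1)) :
    ContinuousOn (fun s => Real.sqrt (2 * W (γ s)) * ‖γ' s‖) (Set.Icc (0:ℝ) 1) := by
  have h1 : ContinuousOn (fun s => Real.sqrt (2 * W (γ s))) (Set.Icc (0:ℝ) 1) :=
    Real.continuous_sqrt.comp_continuousOn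
      ((continuous_const.mul hWc).comp_continuousOn (path_contOn hd))
  exact h1.mul hc.norm

end GeodBasic

/-! ### Concatenation of paths -/

section Concat

open Set Real

variable {N : ℕ}

/-- Concatenation of two paths, smoothly reparametrised. -/
noncomputable def GeodAux.conc (γ₁ γ₂ : ℝ → EuclideanSpace ℝ (Fin N)) :
    ℝ → EuclideanSpace ℝ (Fin N) :=
  fun t => if t ≤ 1/2 then γ₁ (Real.smoothTransition (2*t))
    else γ₂ (Real.smoothTransition (2*t - 1))

/-- Derivative of the concatenation. -/
noncomputable def GeodAux.conc' (γ₁' γ₂' : ℝ → EuclideanSpace ℝ (Fin N)) :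
    ℝ → EuclideanSpace ℝ (Fin N) :=
  fun t => if t ≤ 1/2 then (2 * GeodAux.ψ' (2*t)) • γ₁' (Real.smoothTransition (2*t))
    else (2 * GeodAux.ψ' (2*t-1)) • γ₂' (Real.smoothTransition (2*t-1))

namespace GeodAux

theorem concL_hasDerivAt {γ₁ γ₁' : ℝ → EuclideanSpace ℝ (Fin N)}
    (hd₁ : ∀ t ∈ Set.Icc (0 : ℝ) 1, HasDerivAt γ₁ (γ₁' t) t) (t : ℝ) :
    HasDerivAt (fun t => γ₁ (Real.smoothTransition (2*t)))
      ((2 * ψ' (2*t)) • γ₁' (Real.smoothTransition (2*t))) t :=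
  (hd₁ _ (ψ_mem (2*t))).scomp t (ψ2_hasDerivAt t)

theorem concR_hasDerivAt {γ₂ γ₂' : ℝ → EuclideanSpace ℝ (Fin N)}
    (hd₂ : ∀ t ∈ Set.Icc (0 : ℝ) 1, HasDerivAt γ₂ (γ₂' t) t) (t : ℝ) :
    HasDerivAt (fun t => γ₂ (Real.smoothTransition (2*t - 1)))
      ((2 * ψ' (2*t - 1)) • γ₂' (Real.smoothTransition (2*t - 1))) t :=
  (hd₂ _ (ψ_mem (2*t - 1))).scomp t (ψ21_hasDerivAt t)

theorem conc_junction {γ₁ γ₂ : ℝ → EuclideanSpace ℝ (Fin N)} (hmatch : γ₁ 1 = γ₂ 0) :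
    γ₁ (Real.smoothTransition (2*(1/2 : ℝ)))
      = γ₂ (Real.smoothTransition (2*(1/2 : ℝ) - 1)) := by
  norm_num [Real.smoothTransition.one, Real.smoothTransition.zero, hmatch]

theorem conc_hasDerivAt {γ₁ γ₁' γ₂ γ₂' : ℝ → EuclideanSpace ℝ (Fin N)}
    (hd₁ : ∀ t ∈ Set.Icc (0 : ℝ) 1, HasDerivAt γ₁ (γ₁' t) t)
    (hd₂ : ∀ t ∈ Set.Icc (0 : ℝ) 1, HasDerivAt γ₂ (γ₂' t) t)
    (hmatch : γ₁ 1 = γ₂ 0) (t : ℝ) :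
    HasDerivAt (conc γ₁ γ₂) (conc' γ₁' γ₂' t) t := by
  rcases lt_trichotomy t (1/2) with ht | ht | ht
  · have heq : conc γ₁ γ₂ =ᶠ[nhds t] (fun t => γ₁ (Real.smoothTransition (2*t))) := by
      filter_upwards [eventually_lt_nhds ht] with s hs
      simp only [conc, if_pos hs.le]
    have h := (concL_hasDerivAt hd₁ t).congr_of_eventuallyEq heq
    simp only [conc', if_pos ht.le]
    exact h
  · subst ht
    have hv1 : (2 * ψ' (2*(1/2:ℝ))) • γ₁' (Real.smoothTransition (2*(1/2:ℝ))) = 0 := by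
      norm_num [ψ'_one]
    have hv2 : (2 * ψ' (2*(1/2:ℝ) - 1)) • γ₂' (Real.smoothTransition (2*(1/2:ℝ) - 1)) = 0 := by
      norm_num [ψ'_zero]
    have hL : HasDerivAt (fun t => γ₁ (Real.smoothTransition (2*t))) 0 (1/2) :=
      hv1 ▸ concL_hasDerivAt hd₁ (1/2)
    have hR : HasDerivAt (fun t => γ₂ (Real.smoothTransition (2*t - 1))) 0 (1/2) :=
      hv2 ▸ concR_hasDerivAt hd₂ (1/2)
    have hIic : HasDerivWithinAt (conc γ₁ γ₂) 0 (Set.Iic (1/2)) (1/2) := by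
      refine hL.hasDerivWithinAt.congr (fun s hs => ?_) ?_
      · simp only [conc, if_pos (Set.mem_Iic.mp hs)]
      · simp only [conc, if_pos (le_refl (1/2 : ℝ))]
    have hIci : HasDerivWithinAt (conc γ₁ γ₂) 0 (Set.Ici (1/2)) (1/2) := by
      refine hR.hasDerivWithinAt.congr (fun s hs => ?_) ?_
      · rcases eq_or_lt_of_le (Set.mem_Ici.mp hs) with h | h
        · rw [← h]
          simp only [conc, if_pos (le_refl (1/2 : ℝ))]
          exact conc_junction hmatch
        · simp only [conc, if_neg (not_le.2 h)]
      · simp only [conc, if_pos (le_refl (1/2 : ℝ))]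
        exact conc_junction hmatch
    have huniv := hIic.union hIci
    rw [Set.Iic_union_Ici, hasDerivWithinAt_univ] at huniv
    have hval : conc' γ₁' γ₂' (1/2) = 0 := by
      simp only [conc', if_pos (le_refl (1/2 : ℝ))]
      exact hv1
    rw [hval]
    exact huniv
  · have heq : conc γ₁ γ₂ =ᶠ[nhds t] (fun t => γ₂ (Real.smoothTransition (2*t - 1))) := by
      filter_upwards [eventually_gt_nhds ht] with s hs
      simp only [conc, if_neg (not_le.2 hs)]
    have h := (concR_hasDerivAt hd₂ t).congr_of_eventuallyEq heq
    simp only [conc', if_neg (not_le.2 ht)]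
    exact h

theorem conc'_continuous {γ₁' γ₂' : ℝ → EuclideanSpace ℝ (Fin N)}
    (hc₁ : ContinuousOn γ₁' (Set.Icc (0 : ℝ) 1))
    (hc₂ : ContinuousOn γ₂' (Set.Icc (0 : ℝ) 1)) :
    Continuous (conc' γ₁' γ₂') := by
  have hL : Continuous
      (fun t : ℝ => (2 * ψ' (2*t)) • γ₁' (Real.smoothTransition (2*t))) := by
    refine Continuous.smul (continuous_const.mul (ψ'_cont.comp (by continuity))) ?_
    exact hc₁.comp_continuous
      (Real.smoothTransition.continuous.comp (by continuity)) (fun t => ψ_mem (2*t))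
  have hR : Continuous
      (fun t : ℝ => (2 * ψ' (2*t - 1)) • γ₂' (Real.smoothTransition (2*t - 1))) := by
    refine Continuous.smul (continuous_const.mul (ψ'_cont.comp (by continuity))) ?_
    exact hc₂.comp_continuous
      (Real.smoothTransition.continuous.comp (by continuity)) (fun t => ψ_mem (2*t - 1))
  refine hL.if_le hR continuous_id continuous_const (fun t ht => ?_)
  subst ht
  norm_num [ψ'_one, ψ'_zero]

theorem conc_integral {W : EuclideanSpace ℝ (Fin N) → ℝ} (hWc : Continuous W)
    {γ₁ γ₁' γ₂ γ₂' : ℝ → EuclideanSpace ℝ (Fin N)}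
    (hd₁ : ∀ t ∈ Set.Icc (0 : ℝ) 1, HasDerivAt γ₁ (γ₁' t) t)
    (hd₂ : ∀ t ∈ Set.Icc (0 : ℝ) 1, HasDerivAt γ₂ (γ₂' t) t)
    (hc₁ : ContinuousOn γ₁' (Set.Icc (0 : ℝ) 1))
    (hc₂ : ContinuousOn γ₂' (Set.Icc (0 : ℝ) 1))
    (hconc : Continuous (conc γ₁ γ₂)) (hconc' : Continuous (conc' γ₁' γ₂')) :
    (∫ t in (0:ℝ)..1, Real.sqrt (2 * W (conc γ₁ γ₂ t)) * ‖conc' γ₁' γ₂' t‖)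
      = (∫ t in (0:ℝ)..1, Real.sqrt (2 * W (γ₁ t)) * ‖γ₁' t‖)
        + ∫ t in (0:ℝ)..1, Real.sqrt (2 * W (γ₂ t)) * ‖γ₂' t‖ := by
  set G : ℝ → ℝ := fun t => Real.sqrt (2 * W (conc γ₁ γ₂ t)) * ‖conc' γ₁' γ₂' t‖ with hG
  have hGcont : Continuous G := by
    apply Continuous.mul
    · exact Real.continuous_sqrt.comp (continuous_const.mul (hWc.comp hconc))
    · exact hconc'.norm
  have hsplit : (∫ t in (0:ℝ)..1, G t)
      = (∫ t in (0:ℝ)..(1/2), G t) + ∫ t in (1/2:ℝ)..1, G t := by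
    rw [intervalIntegral.integral_add_adjacent_intervals] <;>
      exact hGcont.intervalIntegrable _ _
  have hF₁ : ContinuousOn (fun s => Real.sqrt (2 * W (γ₁ s)) * ‖γ₁' s‖) (Set.Icc (0:ℝ) 1) :=
    integrand_contOn hWc hd₁ hc₁
  have hleft : (∫ t in (0:ℝ)..(1/2), G t)
      = ∫ s in (0:ℝ)..1, Real.sqrt (2 * W (γ₁ s)) * ‖γ₁' s‖ := by
    have heq : Set.EqOn G
        (fun t => (2 * ψ' (2*t)) • ((fun s => Real.sqrt (2 * W (γ₁ s)) * ‖γ₁' s‖)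
          ∘ (fun t => Real.smoothTransition (2*t))) t)
        (Set.uIcc (0:ℝ) (1/2)) := by
      intro t ht
      rw [Set.uIcc_of_le (by norm_num)] at ht
      have ht2 : t ≤ 1/2 := ht.2
      simp only [hG, conc, conc', if_pos ht2, Function.comp, smul_eq_mul]
      rw [norm_smul, Real.norm_eq_abs, abs_of_nonneg (mul_nonneg (by norm_num) (ψ'_nonneg _))]
      ring
    rw [intervalIntegral.integral_congr heq]
    rw [intervalIntegral.integral_comp_smul_deriv' (fun x _ => ψ2_hasDerivAt x)
      ((continuous_const.mul (ψ'_cont.comp (by continuity))).continuousOn)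
      (hF₁.mono ?_)]
    · norm_num [Real.smoothTransition.one, Real.smoothTransition.zero]
    · rintro x ⟨t, _, rfl⟩
      exact ψ_mem _
  have hF₂ : ContinuousOn (fun s => Real.sqrt (2 * W (γ₂ s)) * ‖γ₂' s‖) (Set.Icc (0:ℝ) 1) :=
    integrand_contOn hWc hd₂ hc₂
  have hright : (∫ t in (1/2:ℝ)..1, G t)
      = ∫ s in (0:ℝ)..1, Real.sqrt (2 * W (γ₂ s)) * ‖γ₂' s‖ := by
    have heq : Set.EqOn G
        (fun t => (2 * ψ' (2*t - 1)) • ((fun s => Real.sqrt (2 * W (γ₂ s)) * ‖γ₂' s‖)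
          ∘ (fun t => Real.smoothTransition (2*t - 1))) t)
        (Set.uIcc (1/2:ℝ) 1) := by
      intro t ht
      rw [Set.uIcc_of_le (by norm_num)] at ht
      rcases eq_or_lt_of_le ht.1 with h | h
      · rw [← h]
        simp only [hG, conc, conc', if_pos (le_refl (1/2:ℝ)), Function.comp, smul_eq_mul]
        norm_num [ψ'_one, ψ'_zero]
      · simp only [hG, conc, conc', if_neg (not_le.2 h), Function.comp, smul_eq_mul]
        rw [norm_smul, Real.norm_eq_abs, abs_of_nonneg (mul_nonneg (by norm_num) (ψ'_nonneg _))]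
        ring
    rw [intervalIntegral.integral_congr heq]
    rw [intervalIntegral.integral_comp_smul_deriv' (fun x _ => ψ21_hasDerivAt x)
      ((continuous_const.mul (ψ'_cont.comp (by continuity))).continuousOn)
      (hF₂.mono ?_)]
    · norm_num [Real.smoothTransition.one, Real.smoothTransition.zero]
    · rintro x ⟨t, _, rfl⟩
      exact ψ_mem _
  rw [hsplit, hleft, hright]

end GeodAux

/-- Triangle inequality for the geodesic distance. -/
theorem geodDist_triangle {W : EuclideanSpace ℝ (Fin N) → ℝ} (hWc : Continuous W)
    (u v w : EuclideanSpace ℝ (Fin N)) :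
    geodDist W u w ≤ geodDist W u v + geodDist W v w := by
  classical
  have key : ∀ r ∈ {r : ℝ≥0∞ | ∃ γ γ' : ℝ → EuclideanSpace ℝ (Fin N),
      (∀ t ∈ Set.Icc (0 : ℝ) 1, HasDerivAt γ (γ' t) t) ∧
      ContinuousOn γ' (Set.Icc (0 : ℝ) 1) ∧ γ 0 = u ∧ γ 1 = v ∧
      r = ENNReal.ofReal (∫ t in (0 : ℝ)..1, Real.sqrt (2 * W (γ t)) * ‖γ' t‖)},
      ∀ s ∈ {r : ℝ≥0∞ | ∃ γ γ' : ℝ → EuclideanSpace ℝ (Fin N),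
      (∀ t ∈ Set.Icc (0 : ℝ) 1, HasDerivAt γ (γ' t) t) ∧
      ContinuousOn γ' (Set.Icc (0 : ℝ) 1) ∧ γ 0 = v ∧ γ 1 = w ∧
      r = ENNReal.ofReal (∫ t in (0 : ℝ)..1, Real.sqrt (2 * W (γ t)) * ‖γ' t‖)},
      geodDist W u w ≤ r + s := by
    rintro r ⟨γ₁, γ₁', hd₁, hc₁, h10, h11, rfl⟩ s ⟨γ₂, γ₂', hd₂, hc₂, h20, h21, rfl⟩
    have hmatch : γ₁ 1 = γ₂ 0 := by rw [h11, h20]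
    have hderiv := GeodAux.conc_hasDerivAt hd₁ hd₂ hmatch
    have hconc : Continuous (GeodAux.conc γ₁ γ₂) :=
      continuous_iff_continuousAt.2 fun t => (hderiv t).continuousAt
    have hconc' : Continuous (GeodAux.conc' γ₁' γ₂') := GeodAux.conc'_continuous hc₁ hc₂
    have h0 : GeodAux.conc γ₁ γ₂ 0 = u := by
      simp only [GeodAux.conc, mul_zero, if_pos (by norm_num : (0:ℝ) ≤ 1/2)]
      rw [Real.smoothTransition.zero, h10]
    have h1 : GeodAux.conc γ₁ γ₂ 1 = w := by
      simp only [GeodAux.conc, mul_one, if_neg (by norm_num : ¬ (1:ℝ) ≤ 1/2)]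
      norm_num [Real.smoothTransition.one, h21]
    calc geodDist W u w
        ≤ ENNReal.ofReal (∫ t in (0:ℝ)..1,
            Real.sqrt (2 * W (GeodAux.conc γ₁ γ₂ t)) * ‖GeodAux.conc' γ₁' γ₂' t‖) :=
          geodDist_le _ _ (fun t _ => hderiv t) hconc'.continuousOn h0 h1
      _ = ENNReal.ofReal ((∫ t in (0:ℝ)..1, Real.sqrt (2 * W (γ₁ t)) * ‖γ₁' t‖)
            + ∫ t in (0:ℝ)..1, Real.sqrt (2 * W (γ₂ t)) * ‖γ₂' t‖) := by
          rw [GeodAux.conc_integral hWc hd₁ hd₂ hc₁ hc₂ hconc hconc']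
      _ ≤ _ := ENNReal.ofReal_add_le
  -- conclude via an ε-argument
  refine ENNReal.le_of_forall_pos_le_add fun ε hε _ => ?_
  have hε2 : (0 : ℝ≥0∞) < (ε : ℝ≥0∞) / 2 := by
    simp only [ENNReal.div_pos_iff]
    exact ⟨by exact_mod_cast hε.ne', by norm_num⟩
  have h₁ : geodDist W u v < geodDist W u v + ε / 2 :=
    ENNReal.lt_add_right geodDist_lt_top.ne hε2.ne'
  have h₂ : geodDist W v w < geodDist W v w + ε / 2 :=
    ENNReal.lt_add_right geodDist_lt_top.ne hε2.ne'
  obtain ⟨r, hrmem, hr⟩ := sInf_lt_iff.mp h₁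
  obtain ⟨s, hsmem, hs⟩ := sInf_lt_iff.mp h₂
  calc geodDist W u w ≤ r + s := key r hrmem s hsmem
    _ ≤ (geodDist W u v + ε / 2) + (geodDist W v w + ε / 2) := add_le_add hr.le hs.le
    _ = geodDist W u v + geodDist W v w + (ε / 2 + ε / 2) := by ring
    _ = geodDist W u v + geodDist W v w + ε := by rw [ENNReal.add_halves]

end Concat

/-! ### Lower bound when `u ≠ v` -/

section LowerBound

open Set Real

variable {N : ℕ}

theorem geod_lower_bound {W : EuclideanSpace ℝ (Fin N) → ℝ}
    (hWc : Continuous W) (hWnn : ∀ u, 0 ≤ W u)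
    (S : Finset (EuclideanSpace ℝ (Fin N)))
    (hzero : {u | W u = 0} = (S : Set (EuclideanSpace ℝ (Fin N))))
    {u v : EuclideanSpace ℝ (Fin N)} (huv : u ≠ v) :
    ∃ c : ℝ, 0 < c ∧ ∀ γ γ' : ℝ → EuclideanSpace ℝ (Fin N),
      (∀ t ∈ Set.Icc (0 : ℝ) 1, HasDerivAt γ (γ' t) t) →
      ContinuousOn γ' (Set.Icc (0 : ℝ) 1) → γ 0 = u → γ 1 = v →
      c ≤ ∫ t in (0 : ℝ)..1, Real.sqrt (2 * W (γ t)) * ‖γ' t‖ := by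
  set R : ℝ := ‖v - u‖ with hRdef
  have hR : 0 < R := by
    simpa [hRdef, norm_pos_iff, sub_ne_zero] using (Ne.symm huv)
  set B : Set ℝ := (fun α => ‖α - u‖) '' (S : Set (EuclideanSpace ℝ (Fin N))) with hBdef
  have hBfin : B.Finite := S.finite_toSet.image _
  obtain ⟨x, hx⟩ := ((Set.Ioo_infinite hR).diff hBfin).nonempty
  have hopen : IsOpen (Set.Ioo 0 R \ B) := isOpen_Ioo.sdiff hBfin.isClosed
  obtain ⟨ε, hε, hball⟩ := Metric.isOpen_iff.mp hopen x hx
  set r₁ : ℝ := x - ε/2 with hr₁def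
  set r₂ : ℝ := x + ε/2 with hr₂def
  have hsub : Set.Icc r₁ r₂ ⊆ Set.Ioo 0 R \ B := by
    intro y hy
    apply hball
    rw [Metric.mem_ball, Real.dist_eq, abs_lt]
    have h1 := hy.1
    have h2 := hy.2
    rw [hr₁def] at h1
    rw [hr₂def] at h2
    constructor <;> linarith
  have h12 : r₁ < r₂ := by simp [hr₁def, hr₂def]; linarith
  have hr₁mem := hsub (Set.left_mem_Icc.2 h12.le)
  have hr₂mem := hsub (Set.right_mem_Icc.2 h12.le)
  have hr₁pos : 0 < r₁ := hr₁mem.1.1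
  have hr₂R : r₂ < R := hr₂mem.1.2
  set A : Set (EuclideanSpace ℝ (Fin N)) := {x | ‖x - u‖ ∈ Set.Icc r₁ r₂} with hAdef
  have hAclosed : IsClosed A := by
    have h : Continuous (fun x : EuclideanSpace ℝ (Fin N) => ‖x - u‖) := by continuity
    exact isClosed_Icc.preimage h
  have hAcomp : IsCompact A := by
    refine (isCompact_closedBall u r₂).of_isClosed_subset hAclosed ?_
    intro x hx
    rw [Metric.mem_closedBall, dist_eq_norm]
    exact hx.2
  have hAne : A.Nonempty := by
    refine ⟨u + (r₁/R) • (v - u), ?_⟩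
    have h : (u + (r₁/R) • (v - u)) - u = (r₁/R) • (v - u) := by abel
    simp only [hAdef, Set.mem_setOf_eq, h, norm_smul, Real.norm_eq_abs,
      abs_of_nonneg (div_nonneg hr₁pos.le hR.le)]
    rw [← hRdef, div_mul_cancel₀ _ hR.ne']
    exact Set.left_mem_Icc.2 h12.le
  obtain ⟨z, hzA, hzmin⟩ := hAcomp.exists_isMinOn hAne hWc.continuousOn
  have hzpos : 0 < W z := by
    rcases (hWnn z).eq_or_lt with h | h
    · exfalso
      have hzS : z ∈ (S : Set (EuclideanSpace ℝ (Fin N))) := by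
        rw [← hzero]; exact h.symm
      have hmem : ‖z - u‖ ∈ B := ⟨z, hzS, rfl⟩
      exact (hsub hzA).2 hmem
    · exact h
  refine ⟨Real.sqrt (2 * W z) * (r₂ - r₁),
    mul_pos (Real.sqrt_pos.2 (by linarith)) (by linarith), ?_⟩
  intro γ γ' hd hc h0 h1
  set f : ℝ → ℝ := fun t => ‖γ t - u‖ with hfdef
  have hfc : ContinuousOn f (Set.Icc 0 1) := ((path_contOn hd).sub continuousOn_const).norm
  set T₂ : Set ℝ := Set.Icc (0:ℝ) 1 ∩ f ⁻¹' (Set.Ici r₂) with hT₂def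
  have hT₂c : IsClosed T₂ := hfc.preimage_isClosed_of_isClosed isClosed_Icc isClosed_Ici
  have hT₂ne : (1:ℝ) ∈ T₂ := by
    refine ⟨Set.right_mem_Icc.2 zero_le_one, ?_⟩
    simp only [Set.mem_preimage, Set.mem_Ici, hfdef, h1]
    exact hr₂R.le
  have hT₂bdd : BddBelow T₂ := (bddBelow_Icc : BddBelow (Set.Icc (0:ℝ) 1)).mono Set.inter_subset_left
  set b : ℝ := sInf T₂ with hbdef
  have hbmem : b ∈ T₂ := hT₂c.csInf_mem ⟨1, hT₂ne⟩ hT₂bdd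
  have hb01 : b ∈ Set.Icc (0:ℝ) 1 := hbmem.1
  have hfb : r₂ ≤ f b := hbmem.2
  set T₁ : Set ℝ := Set.Icc (0:ℝ) b ∩ f ⁻¹' (Set.Iic r₁) with hT₁def
  have hT₁c : IsClosed T₁ := by
    refine ContinuousOn.preimage_isClosed_of_isClosed (hfc.mono ?_) isClosed_Icc isClosed_Iic
    exact Set.Icc_subset_Icc_right hb01.2
  have hT₁ne : (0:ℝ) ∈ T₁ := by
    refine ⟨Set.left_mem_Icc.2 hb01.1, ?_⟩
    simp only [Set.mem_preimage, Set.mem_Iic, hfdef, h0]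
    simp
    exact hr₁pos.le
  have hT₁bdd : BddAbove T₁ := (bddAbove_Icc : BddAbove (Set.Icc (0:ℝ) b)).mono Set.inter_subset_left
  set a : ℝ := sSup T₁ with hadef
  have hamem : a ∈ T₁ := hT₁c.csSup_mem ⟨0, hT₁ne⟩ hT₁bdd
  have ha0b : a ∈ Set.Icc (0:ℝ) b := hamem.1
  have hfa : f a ≤ r₁ := hamem.2
  have hab : a ≤ b := ha0b.2
  have hmid : ∀ t ∈ Set.Ioo a b, γ t ∈ A := by
    intro t ht
    have ht0 : 0 ≤ t := le_trans ha0b.1 ht.1.le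
    have ht1 : t ≤ 1 := le_trans ht.2.le hb01.2
    constructor
    · by_contra hcon
      push_neg at hcon
      have hmem : t ∈ T₁ := ⟨⟨ht0, ht.2.le⟩, hcon.le⟩
      exact absurd (le_csSup hT₁bdd hmem) (not_le.2 ht.1)
    · by_contra hcon
      push_neg at hcon
      have hmem : t ∈ T₂ := ⟨⟨ht0, ht1⟩, hcon.le⟩
      exact absurd (csInf_le hT₂bdd hmem) (not_le.2 ht.2)
  have hGcont := integrand_contOn hWc hd hc
  have hintG : ∀ c d : ℝ, Set.uIcc c d ⊆ Set.Icc (0:ℝ) 1 →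
      IntervalIntegrable (fun s => Real.sqrt (2 * W (γ s)) * ‖γ' s‖) volume c d :=
    fun c d h => (hGcont.mono h).intervalIntegrable
  have huIcc : Set.uIcc a b ⊆ Set.Icc (0:ℝ) 1 := by
    rw [Set.uIcc_of_le hab]
    exact Set.Icc_subset_Icc ha0b.1 hb01.2
  have hnormint : IntervalIntegrable (fun s => Real.sqrt (2 * W z) * ‖γ' s‖) volume a b :=
    (continuousOn_const.mul ((hc.mono huIcc).norm)).intervalIntegrable
  have hstep1 : (∫ t in a..b, Real.sqrt (2 * W (γ t)) * ‖γ' t‖)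
      ≤ ∫ t in (0:ℝ)..1, Real.sqrt (2 * W (γ t)) * ‖γ' t‖ := by
    have hnn : ∀ c d : ℝ, c ≤ d →
        0 ≤ ∫ t in c..d, Real.sqrt (2 * W (γ t)) * ‖γ' t‖ := by
      intro c d h2
      refine intervalIntegral.integral_nonneg h2 (fun s _ => ?_)
      positivity
    have e1 : (∫ t in (0:ℝ)..a, Real.sqrt (2 * W (γ t)) * ‖γ' t‖)
        + ∫ t in a..1, Real.sqrt (2 * W (γ t)) * ‖γ' t‖
        = ∫ t in (0:ℝ)..1, Real.sqrt (2 * W (γ t)) * ‖γ' t‖ := by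
      refine intervalIntegral.integral_add_adjacent_intervals (hintG _ _ ?_) (hintG _ _ ?_)
      · rw [Set.uIcc_of_le ha0b.1]; exact Set.Icc_subset_Icc_right (hab.trans hb01.2)
      · rw [Set.uIcc_of_le (hab.trans hb01.2)]; exact Set.Icc_subset_Icc_left ha0b.1
    have e2 : (∫ t in a..b, Real.sqrt (2 * W (γ t)) * ‖γ' t‖)
        + ∫ t in b..1, Real.sqrt (2 * W (γ t)) * ‖γ' t‖
        = ∫ t in a..1, Real.sqrt (2 * W (γ t)) * ‖γ' t‖ := by
      refine intervalIntegral.integral_add_adjacent_intervals (hintG _ _ huIcc) (hintG _ _ ?_)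
      rw [Set.uIcc_of_le hb01.2]; exact Set.Icc_subset_Icc_left hb01.1
    have n1 := hnn 0 a ha0b.1
    have n2 := hnn b 1 hb01.2
    linarith
  have hstep2 : (∫ t in a..b, Real.sqrt (2 * W z) * ‖γ' t‖)
      ≤ ∫ t in a..b, Real.sqrt (2 * W (γ t)) * ‖γ' t‖ := by
    refine intervalIntegral.integral_mono_ae_restrict hab hnormint (hintG _ _ huIcc) ?_
    have hae : ∀ᵐ t ∂(volume.restrict (Set.Icc a b)), t ∈ Set.Ioo a b := by
      rw [ae_restrict_iff' measurableSet_Icc]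
      have hnull : volume ({a, b} : Set ℝ) = 0 :=
        (Set.toFinite ({a, b} : Set ℝ)).measure_zero volume
      filter_upwards [measure_eq_zero_iff_ae_notMem.mp hnull] with t ht hta
      constructor
      · rcases lt_or_eq_of_le hta.1 with h | h
        · exact h
        · exact absurd (by simp [← h] : t ∈ ({a, b} : Set ℝ)) ht
      · rcases lt_or_eq_of_le hta.2 with h | h
        · exact h
        · exact absurd (by simp [h] : t ∈ ({a, b} : Set ℝ)) ht
    filter_upwards [hae] with t ht
    have hAt := hmid t ht
    have hWt : W z ≤ W (γ t) := hzmin hAt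
    have hsq : Real.sqrt (2 * W z) ≤ Real.sqrt (2 * W (γ t)) :=
      Real.sqrt_le_sqrt (by linarith)
    exact mul_le_mul_of_nonneg_right hsq (norm_nonneg _)
  have hFTC : (∫ t in a..b, γ' t) = γ b - γ a := by
    refine intervalIntegral.integral_eq_sub_of_hasDerivAt (fun t ht => hd t (huIcc ht)) ?_
    exact ((hc.mono huIcc).intervalIntegrable)
  have hstep3 : ‖γ b - γ a‖ ≤ ∫ t in a..b, ‖γ' t‖ := by
    rw [← hFTC]
    exact intervalIntegral.norm_integral_le_integral_norm hab
  have hdist : r₂ - r₁ ≤ ‖γ b - γ a‖ := by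
    have h1 : f b - f a ≤ ‖γ b - γ a‖ := by
      have h := norm_sub_norm_le (γ b - u) (γ a - u)
      simpa [hfdef, sub_sub_sub_cancel_right] using h
    linarith
  have hconst : (∫ t in a..b, Real.sqrt (2 * W z) * ‖γ' t‖)
      = Real.sqrt (2 * W z) * ∫ t in a..b, ‖γ' t‖ :=
    intervalIntegral.integral_const_mul _ _
  have hsqrtnn : (0:ℝ) ≤ Real.sqrt (2 * W z) := Real.sqrt_nonneg _
  calc Real.sqrt (2 * W z) * (r₂ - r₁)
      ≤ Real.sqrt (2 * W z) * ‖γ b - γ a‖ := mul_le_mul_of_nonneg_left hdist hsqrtnn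
    _ ≤ Real.sqrt (2 * W z) * ∫ t in a..b, ‖γ' t‖ :=
        mul_le_mul_of_nonneg_left hstep3 hsqrtnn
    _ = ∫ t in a..b, Real.sqrt (2 * W z) * ‖γ' t‖ := hconst.symm
    _ ≤ ∫ t in a..b, Real.sqrt (2 * W (γ t)) * ‖γ' t‖ := hstep2
    _ ≤ ∫ t in (0:ℝ)..1, Real.sqrt (2 * W (γ t)) * ‖γ' t‖ := hstep1

end LowerBound

/-- **The geodesic distance is a metric.** If `W : ℝ^N → [0,∞)` is continuous with
nonempty finite zero set, then `d_W` is finite, symmetric, satisfies the triangle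
inequality, and vanishes exactly on the diagonal. -/
theorem geodDist_is_metric {N : ℕ} (W : EuclideanSpace ℝ (Fin N) → ℝ)
    (hWc : Continuous W) (hWnn : ∀ u, 0 ≤ W u)
    (S : Finset (EuclideanSpace ℝ (Fin N))) (hSne : S.Nonempty)
    (hzero : {u | W u = 0} = (S : Set (EuclideanSpace ℝ (Fin N)))) :
    ∀ u v w : EuclideanSpace ℝ (Fin N),
      geodDist W u v < ⊤ ∧
      geodDist W u v = geodDist W v u ∧
      geodDist W u w ≤ geodDist W u v + geodDist W v w ∧
      (geodDist W u v = 0 ↔ u = v) := by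
  intro u v w
  refine ⟨geodDist_lt_top, le_antisymm geodDist_symm_le geodDist_symm_le,
    geodDist_triangle hWc u v w, ?_, ?_⟩
  · intro h
    by_contra huv
    obtain ⟨c, hc, hbound⟩ := geod_lower_bound hWc hWnn S hzero huv
    have hle : ENNReal.ofReal c ≤ geodDist W u v := by
      refine le_sInf ?_
      rintro r ⟨γ, γ', hd, hcont, h0, h1, rfl⟩
      exact ENNReal.ofReal_le_ofReal (hbound γ γ' hd hcont h0 h1)
    rw [h] at hle
    exact absurd (le_antisymm hle zero_le) (ENNReal.ofReal_pos.2 hc).ne'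
  · rintro rfl
    exact geodDist_self
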